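/- For every ε > 0 and every t ∈ [−1,1], the Piecewise Mechanism is unbiased: ∫_{−C}^{C} x · pdf(x | t) dx = t. -/

import Mathlib

open Real

/-- `C` parameter of the Piecewise Mechanism. -/
noncomputable def pmC (ε : ℝ) : ℝ := (exp (ε / 2) + 1) / (exp (ε / 2) - 1)

/-- density value `p` of the Piecewise Mechanism. -/
noncomputable def pmP (ε : ℝ) : ℝ := (exp ε - exp (ε / 2)) / (2 * exp (ε / 2) + 2)

/-- left endpoint `ℓ(t)` of the center piece. -/
noncomputable def pmL (ε t : ℝ) : ℝ := (pmC ε + 1) / 2 * t - (pmC ε - 1) / 2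

/-- right endpoint `r(t)` of the center piece. -/
noncomputable def pmR (ε t : ℝ) : ℝ := pmL ε t + pmC ε - 1

/-- output probability density of the Piecewise Mechanism. -/
noncomputable def pmPdf (ε t x : ℝ) : ℝ :=
  if pmL ε t ≤ x ∧ x ≤ pmR ε t then pmP ε
  else if -pmC ε ≤ x ∧ x ≤ pmC ε then pmP ε / exp ε
  else 0

open MeasureTheory

/-- The Piecewise Mechanism is unbiased: `∫_{-C}^{C} x · pdf(x | t) dx = t`. -/
theorem stmt_1 (ε : ℝ) (hε : 0 < ε) (t : ℝ) (ht : t ∈ Set.Icc (-1 : ℝ) 1) :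
    ∫ x in (-pmC ε)..(pmC ε), x * pmPdf ε t x = t := by
  obtain ⟨ht1, ht2⟩ := ht
  have hs1 : 1 < exp (ε / 2) := by
    calc (1:ℝ) = exp 0 := by simp
    _ < exp (ε / 2) := exp_lt_exp.mpr (by linarith)
  set s := exp (ε / 2) with hs_def
  have hexp : exp ε = s ^ 2 := by rw [sq, ← Real.exp_add]; ring_nf
  have hC1 : 1 < pmC ε := by
    rw [pmC, lt_div_iff₀ (by linarith)]; linarith
  set C := pmC ε with hC_def
  have hl : -C ≤ pmL ε t := by rw [pmL, ← hC_def]; nlinarith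
  have hlr : pmL ε t ≤ pmR ε t := by rw [pmR, ← hC_def]; linarith
  have hr : pmR ε t ≤ C := by rw [pmR, pmL, ← hC_def]; nlinarith
  have hae : ∀ᵐ x ∂(volume : Measure ℝ), x ≠ pmL ε t := by
    rw [MeasureTheory.ae_iff]
    simpa using Real.volume_singleton (x := pmL ε t)
  -- a.e. equalities on the three pieces
  have e1 : ∀ᵐ x ∂(volume : Measure ℝ), x ∈ Set.uIoc (-C) (pmL ε t) →
      x * pmPdf ε t x = x * (pmP ε / exp ε) := by
    filter_upwards [hae] with x hx hxmem
    rw [Set.uIoc_of_le hl] at hxmem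
    obtain ⟨h1, h2⟩ := hxmem
    have hxl : x < pmL ε t := lt_of_le_of_ne h2 hx
    rw [pmPdf, if_neg (by push_neg; intro h; linarith), ← hC_def,
      if_pos ⟨le_of_lt h1, by linarith⟩]
  have e2 : Set.EqOn (fun x => x * pmPdf ε t x) (fun x => x * pmP ε)
      (Set.uIcc (pmL ε t) (pmR ε t)) := by
    intro x hx
    rw [Set.uIcc_of_le hlr] at hx
    simp only [pmPdf]
    rw [if_pos (show pmL ε t ≤ x ∧ x ≤ pmR ε t from ⟨hx.1, hx.2⟩)]
  have e3 : ∀ x ∈ Set.uIoc (pmR ε t) C,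
      x * pmPdf ε t x = x * (pmP ε / exp ε) := by
    intro x hxmem
    rw [Set.uIoc_of_le hr] at hxmem
    obtain ⟨h1, h2⟩ := hxmem
    rw [pmPdf, if_neg (by push_neg; intro h; linarith), ← hC_def,
      if_pos ⟨by linarith, h2⟩]
  -- integrability on the three pieces
  have Jc : ∀ (a b c : ℝ), IntervalIntegrable (fun x => x * c) volume a b :=
    fun a b c => intervalIntegral.intervalIntegrable_id.mul_const c
  have mem1 : ∀ᵐ x ∂(volume.restrict (Set.uIoc (-C) (pmL ε t))),
      x ∈ Set.uIoc (-C) (pmL ε t) := MeasureTheory.ae_restrict_mem measurableSet_uIoc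
  have h1 : IntervalIntegrable (fun x => x * pmPdf ε t x) volume (-C) (pmL ε t) := by
    refine (Jc _ _ (pmP ε / exp ε)).congr_ae ?_
    filter_upwards [mem1, MeasureTheory.ae_restrict_of_ae (e1)] with x hx h
    exact (h hx).symm
  have h2 : IntervalIntegrable (fun x => x * pmPdf ε t x) volume (pmL ε t) (pmR ε t) := by
    refine (Jc _ _ (pmP ε)).congr_ae ?_
    filter_upwards [MeasureTheory.ae_restrict_mem measurableSet_uIoc] with x hx
    rw [Set.uIoc_of_le hlr] at hx
    exact (e2 (by rw [Set.uIcc_of_le hlr]; exact Set.Ioc_subset_Icc_self hx)).symm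
  have h3 : IntervalIntegrable (fun x => x * pmPdf ε t x) volume (pmR ε t) C := by
    refine (Jc _ _ (pmP ε / exp ε)).congr_ae ?_
    filter_upwards [MeasureTheory.ae_restrict_mem measurableSet_uIoc] with x hx
    exact (e3 x hx).symm
  -- split the integral
  rw [← intervalIntegral.integral_add_adjacent_intervals h1 (h2.trans h3),
    ← intervalIntegral.integral_add_adjacent_intervals h2 h3,
    intervalIntegral.integral_congr_ae e1,
    intervalIntegral.integral_congr e2,
    intervalIntegral.integral_congr_ae (Filter.Eventually.of_forall e3)]
  simp only [intervalIntegral.integral_mul_const, integral_id]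
  rw [pmP, pmR, pmL, hC_def, pmC, ← hs_def, hexp]
  have hs0 : s - 1 ≠ 0 := by linarith
  have hs0' : (2 : ℝ) * s + 2 ≠ 0 := by nlinarith
  have hs0'' : s ≠ 0 := by nlinarith
  field_simp
  ring
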